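/- Let N ~ Geometric on {1, 2, 3, …} with success probability τ, truncated at w+1: P(N = i) = (1-τ)^{i-1}τ for 1 ≤ i ≤ w and P(N = w+1) = (1-τ)^w. Set C = w - N + 1 (so C = 0 iff N = w+1). Then P(C ≥ 1) = 1 - (1-τ)^w, and the conditional estimator β_c = τ^{-1}(f(c) - (1-τ)f(c-1)) satisfies Σ_{c=1}^{w} P(C = c)·β_c = f(w) for every f with f(0) = 0; moreover if f is non-decreasing then β_c ≥ 0 for all c ≥ 1. -/

import Mathlib

lemma sh_aux (τ : ℝ) (hτ : τ ≠ 0) (w : ℕ) (f : ℕ → ℝ) (hf0 : f 0 = 0) :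
    ∑ c ∈ Finset.Icc 1 w,
        ((1 - τ) ^ (w - c) * τ) * (τ⁻¹ * (f c - (1 - τ) * f (c - 1))) = f w := by
  induction w with
  | zero => simp [hf0]
  | succ n ih =>
    rw [Finset.sum_Icc_succ_top (by omega)]
    have h : ∀ c ∈ Finset.Icc 1 n,
        ((1 - τ) ^ (n + 1 - c) * τ) * (τ⁻¹ * (f c - (1 - τ) * f (c - 1)))
        = (1 - τ) * (((1 - τ) ^ (n - c) * τ) * (τ⁻¹ * (f c - (1 - τ) * f (c - 1)))) := by
      intro c hc
      simp only [Finset.mem_Icc] at hc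
      have : n + 1 - c = (n - c) + 1 := by omega
      rw [this, pow_succ]
      ring
    rw [Finset.sum_congr rfl h, ← Finset.mul_sum, ih]
    field_simp
    rw [Nat.sub_self, pow_zero, Nat.add_sub_cancel]; ring

theorem stmt_18 (τ : ℝ) (hτpos : 0 < τ) (hτ1 : τ < 1) (w : ℕ) (f : ℕ → ℝ) (hf0 : f 0 = 0) :
    (∑ c ∈ Finset.Icc 1 w, (1 - τ) ^ (w - c) * τ = 1 - (1 - τ) ^ w) ∧
    (∑ c ∈ Finset.Icc 1 w,
        ((1 - τ) ^ (w - c) * τ) * (τ⁻¹ * (f c - (1 - τ) * f (c - 1))) = f w) ∧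
    (Monotone f → ∀ c, 1 ≤ c → 0 ≤ τ⁻¹ * (f c - (1 - τ) * f (c - 1))) := by
  refine ⟨?_, sh_aux τ hτpos.ne' w f hf0, ?_⟩
  · have := sh_aux τ hτpos.ne' w (fun c => 1 - (1 - τ) ^ c) (by simp)
    simp only [← this]
    apply Finset.sum_congr rfl
    intro c hc
    simp only [Finset.mem_Icc] at hc
    have : c = (c - 1) + 1 := by omega
    rw [this, pow_succ]
    have hτ := hτpos.ne'
    field_simp
    rw [Nat.add_sub_cancel]; ring
  · intro hmono c hc
    have h0 : 0 ≤ f (c - 1) := hf0 ▸ hmono (Nat.zero_le _)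
    have h1 : (1 - τ) * f (c - 1) ≤ f (c - 1) := by nlinarith
    have h2 : f (c - 1) ≤ f c := hmono (by omega)
    have : 0 ≤ f c - (1 - τ) * f (c - 1) := by linarith
    positivity
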